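/- Let μ > 1, 0 < ν < 1. Let t > 0 and D₁, D₂, G ≥ 0 with D₁, D₂ ≤ t·(1/ν + 1/(μν)) and G ≥ (ν+ν²)·t, and let ρ_G = 1 + 1/(ν+ν²) < 2. Then (2D₁ + 2D₂ + ρ_G·G)/(D₁ + D₂ + G) ≤ (4/ν + 4/(μν) + ν + ν² + 1)/(2/ν + 2/(μν) + ν + ν²). -/

import Mathlib

theorem two_red_one_green_group_ratio
    (μ ν : ℝ) (hμ : 1 < μ) (hν0 : 0 < ν) (hν1 : ν < 1)
    (t D₁ D₂ G : ℝ) (ht : 0 < t)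
    (hD₁0 : 0 ≤ D₁) (hD₂0 : 0 ≤ D₂) (hG0 : 0 ≤ G)
    (hD₁ : D₁ ≤ t * (1 / ν + 1 / (μ * ν)))
    (hD₂ : D₂ ≤ t * (1 / ν + 1 / (μ * ν)))
    (hG : G ≥ (ν + ν ^ 2) * t)
    (hρG : 1 + 1 / (ν + ν ^ 2) < 2) :
    (2 * D₁ + 2 * D₂ + (1 + 1 / (ν + ν ^ 2)) * G) / (D₁ + D₂ + G)
      ≤ (4 / ν + 4 / (μ * ν) + ν + ν ^ 2 + 1) / (2 / ν + 2 / (μ * ν) + ν + ν ^ 2) := by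
  have hμ0 : (0:ℝ) < μ := lt_trans one_pos hμ
  have hμν : 0 < μ * ν := mul_pos hμ0 hν0
  have hb : 0 < ν + ν ^ 2 := by positivity
  have hb1 : 1 < ν + ν ^ 2 := by
    have h1 : 1 / (ν + ν ^ 2) < 1 := by linarith
    rw [div_lt_one hb] at h1; exact h1
  have ha : 0 < 1 / ν + 1 / (μ * ν) := by positivity
  have hGpos : 0 < G := lt_of_lt_of_le (by positivity) hG
  have hden1 : 0 < D₁ + D₂ + G := by linarith
  have hden2 : 0 < 2 / ν + 2 / (μ * ν) + ν + ν ^ 2 := by positivity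
  -- key: 2a*G ≥ b*(D₁+D₂)
  have key : (ν + ν ^ 2) * (D₁ + D₂) ≤ 2 * (1 / ν + 1 / (μ * ν)) * G := by
    have h1 : (ν + ν ^ 2) * (D₁ + D₂) ≤ (ν + ν ^ 2) * (2 * (t * (1 / ν + 1 / (μ * ν)))) := by
      apply mul_le_mul_of_nonneg_left (by linarith) hb.le
    have h2 : 2 * (1 / ν + 1 / (μ * ν)) * ((ν + ν ^ 2) * t) ≤ 2 * (1 / ν + 1 / (μ * ν)) * G :=
      mul_le_mul_of_nonneg_left hG (by positivity)
    nlinarith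
  rw [div_le_div_iff₀ hden1 hden2]
  have e1 : (1 : ℝ) + 1 / (ν + ν ^ 2) = (ν + ν ^ 2 + 1) / (ν + ν ^ 2) := by
    field_simp
  rw [e1]
  have e2 : 2 / ν + 2 / (μ * ν) = 2 * (1 / ν + 1 / (μ * ν)) := by ring
  have e3 : 4 / ν + 4 / (μ * ν) = 4 * (1 / ν + 1 / (μ * ν)) := by ring
  rw [e2, e3]
  set a := 1 / ν + 1 / (μ * ν) with ha_def
  set b := ν + ν ^ 2 with hb_def
  have hexp : (b + 1) / b * G = G + G / b := by field_simp
  have hGb : G / b * b = G := by field_simp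
  have key2 : D₁ + D₂ ≤ 2 * a * (G / b) := by
    rw [← mul_div_assoc, le_div_iff₀ hb]
    nlinarith [key]
  have hfin : 0 ≤ (b - 1) * (2 * a * (G / b) - (D₁ + D₂)) :=
    mul_nonneg (by linarith) (by linarith)
  nlinarith [hfin, hGb, hexp]
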